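/- Let p be prime and let k, n ≥ 1 and s ≥ 0 be integers. Then there exists a (Z_p^n, k, s) contracted difference matrix if and only if k ≤ n+s. -/

import Mathlib

def IsAddDiffMatrix {G : Type*} [AddGroup G] {I J : Type*} (A : I → J → G) (lam : ℕ) : Prop :=
  Nat.card J = lam * Nat.card G ∧
  ∀ i ℓ : I, i ≠ ℓ → ∀ g : G, Nat.card {j : J // A i j - A ℓ j = g} = lam

/-- The `p`-expansion of a `k × l` matrix over an abelian group: the `p^k × p^l` matrix
whose `(r, c)` entry is `r M cᵀ`. -/
def pExpand (p : ℕ) {G : Type*} [AddCommGroup G] {k l : ℕ} (M : Fin k → Fin l → G) :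
    (Fin k → ZMod p) → (Fin l → ZMod p) → G :=
  fun r c => ∑ i, ∑ j, ((r i).val * (c j).val) • M i j

/-- A `k × l` matrix `M` over an abelian `p`-group `G` (of order `p^n`, with `l = n + s`)
is a `(G, k, s)` contracted difference matrix if its `p`-expansion is a `(G, p^k, p^s)`
difference matrix. -/
def IsCDM (p : ℕ) {G : Type*} [AddCommGroup G] {k l : ℕ} (M : Fin k → Fin l → G)
    (s : ℕ) : Prop :=
  IsAddDiffMatrix (pExpand p M) (p ^ s)

section Aux

lemma pExpand_eq {p : ℕ} [Fact p.Prime] {G : Type*} [AddCommGroup G] [Module (ZMod p) G]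
    {k l : ℕ} (M : Fin k → Fin l → G) (r : Fin k → ZMod p) (c : Fin l → ZMod p) :
    pExpand p M r c = ∑ i, ∑ j, (r i * c j) • M i j := by
  unfold pExpand
  refine Finset.sum_congr rfl fun i _ => Finset.sum_congr rfl fun j _ => ?_
  rw [← Nat.cast_smul_eq_nsmul (ZMod p), Nat.cast_mul, ZMod.natCast_val, ZMod.natCast_val,
    ZMod.cast_id, ZMod.cast_id]

lemma card_fiber_eq {V W : Type*} [AddCommGroup V] [AddCommGroup W] [Fintype V] [Fintype W]
    (L : V →+ W) (hs : Function.Surjective L) (g : W) :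
    Nat.card {v : V // L v = g} * Fintype.card W = Fintype.card V := by
  classical
  have key : ∀ g : W, Nat.card {v : V // L v = g} = Nat.card {v : V // L v = 0} := by
    intro g
    obtain ⟨v0, hv0⟩ := hs g
    refine Nat.card_congr ⟨fun v => ⟨v.1 - v0, by simp [map_sub, v.2, hv0]⟩,
      fun v => ⟨v.1 + v0, by simp [map_add, v.2, hv0]⟩, fun v => by simp, fun v => by simp⟩
  have hV : Fintype.card V = ∑ g : W, Fintype.card {v : V // L v = g} := by
    rw [← Fintype.card_sigma]
    exact (Fintype.card_congr (Equiv.sigmaFiberEquiv fun v => L v)).symm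
  simp_rw [Nat.card_eq_fintype_card] at key ⊢
  rw [hV, Finset.sum_congr rfl fun g _ => key g, Finset.sum_const, smul_eq_mul,
    Finset.card_univ, mul_comm, key g]

end Aux

/-- There exists a `(Z_p^n, k, s)` contracted difference matrix iff `k ≤ n + s`. -/
theorem stmt_15 (p : ℕ) (hp : p.Prime) (k n s : ℕ) (hk : 1 ≤ k) (hn : 1 ≤ n) :
    (∃ M : Fin k → Fin (n + s) → (Fin n → ZMod p), IsCDM p M s) ↔ k ≤ n + s := by
  haveI := Fact.mk hp
  constructor
  · rintro ⟨M, h1, h2⟩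
    set z : Fin n := ⟨0, hn⟩ with hz
    set f : (Fin k → ZMod p) → Fin (n + s) → ZMod p :=
      fun d j => ∑ i, d i * M i j z with hf
    have hker : ∀ d : Fin k → ZMod p, d ≠ 0 → f d ≠ 0 := by
      intro d hd h0
      have hcard := h2 d 0 hd (fun _ => 1)
      have hpos : 0 < Nat.card {c : Fin (n + s) → ZMod p //
          pExpand p M d c - pExpand p M 0 c = fun _ => 1} := by
        rw [hcard]; exact pow_pos hp.pos s
      obtain ⟨⟨⟨c, hc⟩⟩, -⟩ := Nat.card_pos_iff.mp hpos
      have h00 : pExpand p M (0 : Fin k → ZMod p) c = 0 := by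
        rw [pExpand_eq]
        simp
      rw [h00, sub_zero] at hc
      have hev : pExpand p M d c z = 1 := congrFun hc z
      rw [pExpand_eq] at hev
      have hswap : (∑ i, ∑ j, (d i * c j) • M i j) z
          = ∑ j, c j * f d j := by
        rw [Finset.sum_apply]
        simp_rw [Finset.sum_apply, Pi.smul_apply, smul_eq_mul]
        rw [Finset.sum_comm]
        refine Finset.sum_congr rfl fun j _ => ?_
        rw [hf]
        simp only [Finset.mul_sum]
        refine Finset.sum_congr rfl fun i _ => by ring
      rw [hswap, h0] at hev
      simp at hev
    have hsub : ∀ a b : Fin k → ZMod p, f (a - b) = f a - f b := by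
      intro a b
      funext j
      simp only [hf, Pi.sub_apply, sub_mul, Finset.sum_sub_distrib]
    have hinj : Function.Injective f := by
      intro a b hab
      by_contra hne
      exact hker (a - b) (fun h => hne (sub_eq_zero.mp h)) (by rw [hsub, hab, sub_self])
    have hcardle := Fintype.card_le_of_injective f hinj
    rw [Fintype.card_fun, Fintype.card_fun, ZMod.card, Fintype.card_fin, Fintype.card_fin]
      at hcardle
    exact (Nat.pow_le_pow_iff_right hp.one_lt).mp hcardle
  · intro hks
    have hns : n + s ≠ 0 := by omega
    set K := GaloisField p (n + s) with hK
    let b : Module.Basis (Fin (n + s)) (ZMod p) K :=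
      Module.finBasisOfFinrankEq _ _ (GaloisField.finrank p hns)
    let e := b.equivFun
    let π : K →ₗ[ZMod p] (Fin n → ZMod p) :=
      { toFun := fun x j => e x (Fin.castAdd s j)
        map_add' := fun x y => by funext j; simp
        map_smul' := fun m x => by funext j; simp }
    have hπ : Function.Surjective π := by
      intro g
      refine ⟨e.symm (fun t => if h : (t : ℕ) < n then g ⟨t, h⟩ else 0), ?_⟩
      funext j
      show e (e.symm _) (Fin.castAdd s j) = g j
      rw [e.apply_symm_apply]
      simp [Fin.castAdd]
    let emb : Fin k → Fin (n + s) := Fin.castLE hks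
    refine ⟨fun i j => π (b (emb i) * b j), ?_, ?_⟩
    · show Nat.card (Fin (n + s) → ZMod p) = p ^ s * Nat.card (Fin n → ZMod p)
      simp only [Nat.card_eq_fintype_card, Fintype.card_fun, ZMod.card, Fintype.card_fin]
      rw [← pow_add, add_comm s n]
    · intro r ℓ hne g
      have key : ∀ (r : Fin k → ZMod p) (c : Fin (n + s) → ZMod p),
          pExpand p (fun i j => π (b (emb i) * b j)) r c
            = π ((∑ i, r i • b (emb i)) * e.symm c) := by
        intro r c
        rw [pExpand_eq, b.equivFun_symm_apply, Finset.sum_mul, map_sum]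
        refine Finset.sum_congr rfl fun i _ => ?_
        rw [Finset.mul_sum, map_sum]
        refine Finset.sum_congr rfl fun j _ => ?_
        rw [smul_mul_assoc, mul_smul_comm, map_smul, map_smul, mul_smul]
      set a : K := ∑ i, (r i - ℓ i) • b (emb i) with ha
      have hane : a ≠ 0 := by
        intro h0
        apply hne
        funext i0
        have h2 : b.equivFun a = 0 := by rw [h0, map_zero]
        have h1 : b.equivFun a (emb i0) = 0 := by rw [h2]; rfl
        rw [ha, map_sum] at h1
        rw [Finset.sum_apply] at h1
        classical
        simp only [map_smul, Pi.smul_apply, Module.Basis.equivFun_self, smul_eq_mul] at h1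
        rw [Finset.sum_eq_single i0 (fun i _ hi => by
            rw [if_neg (fun h => hi (Fin.castLE_injective hks h)), mul_zero])
          (fun h => absurd (Finset.mem_univ i0) h)] at h1
        rw [if_pos rfl, mul_one] at h1
        exact sub_eq_zero.mp h1
      have hdiff : ∀ c : Fin (n + s) → ZMod p,
          pExpand p (fun i j => π (b (emb i) * b j)) r c
            - pExpand p (fun i j => π (b (emb i) * b j)) ℓ c
            = π (a * e.symm c) := by
        intro c
        rw [key r c, key ℓ c, ← map_sub, ← sub_mul]
        congr 2
        rw [ha, ← Finset.sum_sub_distrib]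
        exact Finset.sum_congr rfl fun i _ => (sub_smul _ _ _).symm
      let L : (Fin (n + s) → ZMod p) →ₗ[ZMod p] (Fin n → ZMod p) :=
        π.comp ((LinearMap.mulLeft (ZMod p) a).comp (e.symm : _ →ₗ[ZMod p] K))
      have hLsurj : Function.Surjective L := by
        have hmul : Function.Surjective (fun x : K => a * x) := fun y =>
          ⟨a⁻¹ * y, mul_inv_cancel_left₀ hane y⟩
        exact hπ.comp (hmul.comp e.symm.surjective)
      have hcount := card_fiber_eq L.toAddMonoidHom hLsurj g
      have hEq : Nat.card {c : Fin (n + s) → ZMod p //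
            pExpand p (fun i j => π (b (emb i) * b j)) r c
              - pExpand p (fun i j => π (b (emb i) * b j)) ℓ c = g}
          = Nat.card {c // L.toAddMonoidHom c = g} := by
        refine Nat.card_congr (Equiv.subtypeEquivRight fun c => ?_)
        rw [hdiff c]
        rfl
      rw [hEq, ]
      rw [Fintype.card_fun, Fintype.card_fun, ZMod.card, Fintype.card_fin, Fintype.card_fin]
        at hcount
      have : p ^ (n + s) = p ^ s * p ^ n := by rw [← pow_add, add_comm s n]
      rw [this] at hcount
      exact Nat.eq_of_mul_eq_mul_right (pow_pos hp.pos n) hcount
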